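/- arXiv:1507.07576 — 2 statements merged into one kernel-verified Lean document; each statement's English description precedes it below -/
import Mathlib

section
/- If X is a random variable with E X = 0 and |X| ≤ 1/2 almost surely, then E exp(λX) ≤ cosh(λ/2) for all real λ. -/
open MeasureTheory

lemma exp_le_convex_comb (l x : ℝ) (hx : |x| ≤ 1 / 2) :
    Real.exp (l * x) ≤ (1/2 - x) * Real.exp (-(l/2)) + (1/2 + x) * Real.exp (l/2) := by
  rw [abs_le] at hx
  have h1 : (0:ℝ) ≤ 1/2 - x := by linarith [hx.2]
  have h2 : (0:ℝ) ≤ 1/2 + x := by linarith [hx.1]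
  have h := convexOn_exp.2 (Set.mem_univ (-(l/2))) (Set.mem_univ (l/2)) h1 h2 (by ring)
  simp only [smul_eq_mul] at h
  rwa [show (1/2 - x) * (-(l/2)) + (1/2 + x) * (l/2) = l * x by ring] at h

theorem hoeffding_type_cosh_bound {Ω : Type*} [MeasurableSpace Ω]
    (μ : Measure Ω) [IsProbabilityMeasure μ] (X : Ω → ℝ)
    (hX : Measurable X) (hmean : ∫ ω, X ω ∂μ = 0)
    (hbdd : ∀ᵐ ω ∂μ, |X ω| ≤ 1 / 2) (l : ℝ) :
    ∫ ω, Real.exp (l * X ω) ∂μ ≤ Real.cosh (l / 2) := by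
  have hXint : Integrable X μ :=
    ⟨hX.aestronglyMeasurable, HasFiniteIntegral.of_bounded (C := 1/2) hbdd⟩
  have hexpint : Integrable (fun ω => Real.exp (l * X ω)) μ := by
    refine ⟨(Real.measurable_exp.comp (measurable_const.mul hX)).aestronglyMeasurable,
      HasFiniteIntegral.of_bounded (C := Real.exp (|l| / 2)) ?_⟩
    filter_upwards [hbdd] with ω hω
    rw [Real.norm_eq_abs, abs_of_pos (Real.exp_pos _)]
    apply Real.exp_le_exp.2
    calc l * X ω ≤ |l * X ω| := le_abs_self _
      _ = |l| * |X ω| := abs_mul _ _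
      _ ≤ |l| * (1/2) := by apply mul_le_mul_of_nonneg_left hω (abs_nonneg _)
      _ = |l| / 2 := by ring
  have hrhsint : Integrable
      (fun ω => (1/2 - X ω) * Real.exp (-(l/2)) + (1/2 + X ω) * Real.exp (l/2)) μ := by
    apply Integrable.add
    · exact ((integrable_const (1/2 : ℝ)).sub hXint).mul_const _
    · exact ((integrable_const (1/2 : ℝ)).add hXint).mul_const _
  have hmono : ∫ ω, Real.exp (l * X ω) ∂μ ≤
      ∫ ω, ((1/2 - X ω) * Real.exp (-(l/2)) + (1/2 + X ω) * Real.exp (l/2)) ∂μ := by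
    refine integral_mono_ae hexpint hrhsint ?_
    filter_upwards [hbdd] with ω hω
    exact exp_le_convex_comb l (X ω) hω
  refine hmono.trans_eq ?_
  have hre : ∀ ω, (1/2 - X ω) * Real.exp (-(l/2)) + (1/2 + X ω) * Real.exp (l/2)
      = (Real.exp (-(l/2)) + Real.exp (l/2)) / 2
        + X ω * (Real.exp (l/2) - Real.exp (-(l/2))) := fun ω => by ring
  simp only [hre]
  rw [integral_add (integrable_const _) (hXint.mul_const _), integral_mul_const, hmean,
    integral_const, Real.cosh_eq]
  simp [measure_univ, Real.exp_neg]
  ring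
end

section
/- For every r ∈ (0,1), the limit as λ → 0 of arcosh(β_r(λ)) / (|λ|/2) equals 2√(r(1−r)), where β_r(λ) = r·e^{λ(1−r)} + (1−r)·e^{−λr}. -/
open Filter

namespace ArcoshAux

noncomputable def bf (r : ℝ) (l : ℝ) : ℝ :=
  r * Real.exp (l * (1 - r)) + (1 - r) * Real.exp (-l * r)

lemma exp_quad_bound {x : ℝ} (hx : |x| ≤ 1) :
    |Real.exp x - (1 + x + x^2/2)| ≤ |x|^3 * (2/9) := by
  have h := Real.exp_bound hx (n := 3) (by norm_num)
  have h2 : ∑ m ∈ Finset.range 3, x ^ m / m.factorial = 1 + x + x^2/2 := by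
    simp [Finset.sum_range_succ]
  rw [h2] at h
  convert h using 2
  simp [Nat.factorial]
  norm_num

lemma bf_cont (r : ℝ) : Continuous (bf r) := by
  unfold bf; continuity

lemma bf_gt_one {r : ℝ} (hr : r ∈ Set.Ioo (0:ℝ) 1) {l : ℝ} (hl : l ≠ 0) :
    1 < bf r l := by
  obtain ⟨hr0, hr1⟩ := hr
  have hne : l * (1 - r) ≠ -l * r := by
    intro h
    apply hl
    linear_combination h
  have h := strictConvexOn_exp.2 (Set.mem_univ (l * (1 - r))) (Set.mem_univ (-l * r))
    hne hr0 (show (0:ℝ) < 1 - r by linarith) (show r + (1 - r) = 1 by ring)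
  simp only [smul_eq_mul] at h
  have h0 : r * (l * (1 - r)) + (1 - r) * (-l * r) = 0 := by ring
  rw [h0, Real.exp_zero] at h
  exact h

lemma key_tendsto {r : ℝ} (hr : r ∈ Set.Ioo (0:ℝ) 1) :
    Tendsto (fun l => (bf r l - 1) / l ^ 2) (nhdsWithin 0 {0}ᶜ)
      (nhds (r * (1 - r) / 2)) := by
  obtain ⟨hr0, hr1⟩ := hr
  have hdiff : Tendsto (fun l => (bf r l - 1) / l ^ 2 - r * (1 - r) / 2)
      (nhdsWithin 0 {0}ᶜ) (nhds 0) := by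
    apply squeeze_zero_norm' (a := fun l => (2/9) * |l|)
    · have h1 : ∀ᶠ l : ℝ in nhdsWithin 0 {0}ᶜ, |l| ≤ 1 := by
        have hball : ∀ᶠ l : ℝ in nhds 0, |l| ≤ 1 := by
          filter_upwards [Metric.ball_mem_nhds (0:ℝ) one_pos] with y hy
          rw [Metric.mem_ball, Real.dist_eq, sub_zero] at hy
          exact le_of_lt hy
        exact hball.filter_mono nhdsWithin_le_nhds
      have h2 : ∀ᶠ l : ℝ in nhdsWithin 0 {0}ᶜ, l ≠ 0 := eventually_mem_nhdsWithin
      filter_upwards [h1, h2] with l hl1 hl0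
      have h1r : (0:ℝ) < 1 - r := by linarith
      have hE1 := exp_quad_bound (x := l * (1 - r))
        (by rw [abs_mul, abs_of_pos h1r]; nlinarith [abs_nonneg l])
      have hE2 := exp_quad_bound (x := -l * r)
        (by rw [abs_mul, abs_neg, abs_of_pos hr0]; nlinarith [abs_nonneg l])
      set E1 := Real.exp (l * (1 - r)) - (1 + l * (1 - r) + (l * (1 - r))^2/2) with hE1d
      set E2 := Real.exp (-l * r) - (1 + (-l * r) + (-l * r)^2/2) with hE2d
      have hkey : bf r l - 1 - l ^ 2 * (r * (1 - r)) / 2 = r * E1 + (1 - r) * E2 := by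
        rw [hE1d, hE2d]; unfold bf; ring
      have hl2 : (0:ℝ) < l ^ 2 := by positivity
      have habs : |l * (1 - r)| = |l| * (1 - r) := by
        rw [abs_mul, abs_of_pos h1r]
      have habs2 : |(-l * r)| = |l| * r := by
        rw [abs_mul, abs_neg, abs_of_pos hr0]
      rw [habs] at hE1
      rw [habs2] at hE2
      have hb : |bf r l - 1 - l ^ 2 * (r * (1 - r)) / 2| ≤ (2/9) * |l|^3 := by
        rw [hkey]
        have hpoly : r * (1 - r)^3 + (1 - r) * r^3 ≤ 1 := by
          nlinarith [mul_pos hr0 h1r, sq_nonneg (r - (1 - r))]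
        calc |r * E1 + (1 - r) * E2| ≤ r * |E1| + (1 - r) * |E2| := by
              refine (abs_add_le _ _).trans (le_of_eq ?_)
              rw [abs_mul, abs_mul, abs_of_pos hr0, abs_of_pos h1r]
          _ ≤ r * ((|l| * (1 - r))^3 * (2/9)) + (1 - r) * ((|l| * r)^3 * (2/9)) := by
              gcongr
          _ = (2/9) * |l|^3 * (r * (1 - r)^3 + (1 - r) * r^3) := by ring
          _ ≤ (2/9) * |l|^3 * 1 := by
              have h3 : (0:ℝ) ≤ (2/9) * |l|^3 := by positivity
              exact mul_le_mul_of_nonneg_left hpoly h3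
          _ = (2/9) * |l|^3 := by ring
      have heq : (bf r l - 1) / l ^ 2 - r * (1 - r) / 2
          = (bf r l - 1 - l ^ 2 * (r * (1 - r)) / 2) / l ^ 2 := by
        field_simp
        try exact Or.inl (by ring)
        try ring
      rw [Real.norm_eq_abs, heq, abs_div, abs_of_pos hl2]
      rw [div_le_iff₀ hl2]
      calc |bf r l - 1 - l ^ 2 * (r * (1 - r)) / 2| ≤ (2/9) * |l|^3 := hb
        _ = 2 / 9 * |l| * l ^ 2 := by rw [← sq_abs]; ring
    · have : Tendsto (fun l : ℝ => (2/9) * |l|) (nhds 0) (nhds 0) := by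
        have h := continuous_abs.tendsto (0:ℝ)
        simpa using h.const_mul (2/9 : ℝ)
      exact this.mono_left nhdsWithin_le_nhds
  have := hdiff.add_const (r * (1 - r) / 2)
  simpa using this

end ArcoshAux

theorem arcosh_beta_limit_zero (r : ℝ) (hr : r ∈ Set.Ioo (0 : ℝ) 1) :
    Tendsto (fun l : ℝ =>
        Real.log ((r * Real.exp (l * (1 - r)) + (1 - r) * Real.exp (-l * r)) +
          Real.sqrt ((r * Real.exp (l * (1 - r)) + (1 - r) * Real.exp (-l * r)) ^ 2 - 1))
          / (|l| / 2))
      (nhdsWithin 0 {0}ᶜ) (nhds (2 * Real.sqrt (r * (1 - r)))) := by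
  obtain ⟨hr0, hr1⟩ := hr
  have hrIoo : r ∈ Set.Ioo (0:ℝ) 1 := ⟨hr0, hr1⟩
  show Tendsto (fun l : ℝ => Real.log (ArcoshAux.bf r l +
      Real.sqrt (ArcoshAux.bf r l ^ 2 - 1)) / (|l| / 2))
    (nhdsWithin 0 {0}ᶜ) (nhds (2 * Real.sqrt (r * (1 - r))))
  set f := ArcoshAux.bf r with hf
  set K := r * (1 - r) with hK
  have hK0 : 0 ≤ K := by nlinarith
  -- f tends to 1
  have hF : Tendsto f (nhdsWithin 0 {0}ᶜ) (nhds 1) := by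
    have := (ArcoshAux.bf_cont r).tendsto 0
    have h0 : ArcoshAux.bf r 0 = 1 := by unfold ArcoshAux.bf; simp
    rw [h0] at this
    exact this.mono_left nhdsWithin_le_nhds
  have hL1 := ArcoshAux.key_tendsto hrIoo
  rw [← hf, ← hK] at hL1
  -- eventually l ≠ 0 and f l > 1
  have hne : ∀ᶠ l : ℝ in nhdsWithin 0 {0}ᶜ, l ≠ 0 := eventually_mem_nhdsWithin
  have hgt : ∀ᶠ l : ℝ in nhdsWithin 0 {0}ᶜ, 1 < f l := by
    filter_upwards [hne] with l hl
    exact ArcoshAux.bf_gt_one hrIoo hl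
  -- (f^2 - 1)/l^2 → K
  have hE : Tendsto (fun l => (f l ^ 2 - 1) / l ^ 2) (nhdsWithin 0 {0}ᶜ) (nhds K) := by
    have h1 : Tendsto (fun l => (f l - 1) / l ^ 2 * (f l + 1)) (nhdsWithin 0 {0}ᶜ)
        (nhds (K / 2 * (1 + 1))) := hL1.mul (hF.add_const 1)
    have h2 : K / 2 * (1 + 1) = K := by ring
    rw [h2] at h1
    refine h1.congr' ?_
    filter_upwards [hne] with l hl
    have : l ^ 2 ≠ 0 := pow_ne_zero 2 hl
    field_simp
    ring
  have hsqrtE : Tendsto (fun l => Real.sqrt ((f l ^ 2 - 1) / l ^ 2)) (nhdsWithin 0 {0}ᶜ)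
      (nhds (Real.sqrt K)) := (Real.continuous_sqrt.tendsto K).comp hE
  -- |l| → 0
  have habs : Tendsto (fun l : ℝ => |l|) (nhdsWithin 0 {0}ᶜ) (nhds 0) := by
    have := continuous_abs.tendsto (0:ℝ)
    simpa using this.mono_left nhdsWithin_le_nhds
  -- D part
  have hD : Tendsto (fun l => (f l - 1 + Real.sqrt (f l ^ 2 - 1)) / (|l| / 2))
      (nhdsWithin 0 {0}ᶜ) (nhds (2 * Real.sqrt K)) := by
    have h1 : Tendsto (fun l => (f l - 1) / l ^ 2 * (2 * |l|)
        + 2 * Real.sqrt ((f l ^ 2 - 1) / l ^ 2)) (nhdsWithin 0 {0}ᶜ)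
        (nhds (K / 2 * (2 * 0) + 2 * Real.sqrt K)) :=
      (hL1.mul (habs.const_mul 2)).add (hsqrtE.const_mul 2)
    have h2 : K / 2 * (2 * 0) + 2 * Real.sqrt K = 2 * Real.sqrt K := by ring
    rw [h2] at h1
    refine h1.congr' ?_
    filter_upwards [hne, hgt] with l hl hfl
    have hl' : |l| ≠ 0 := abs_ne_zero.mpr hl
    have hfl2 : (0:ℝ) ≤ f l ^ 2 - 1 := by nlinarith
    have hs : Real.sqrt ((f l ^ 2 - 1) / l ^ 2) = Real.sqrt (f l ^ 2 - 1) / |l| := by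
      rw [Real.sqrt_div hfl2, Real.sqrt_sq_eq_abs]
    set m := |l| with hm
    have hm' : m ≠ 0 := hl'
    have hml : l ^ 2 = m ^ 2 := by rw [hm, sq_abs]
    rw [hs, hml]
    field_simp
  -- log factor
  have hu : Tendsto (fun u : ℝ => Real.log (1 + u) / u) (nhdsWithin 0 {0}ᶜ) (nhds 1) := by
    have hd := Real.hasDerivAt_log one_ne_zero
    rw [hasDerivAt_iff_tendsto_slope] at hd
    have htrans : Tendsto (fun u : ℝ => 1 + u) (nhdsWithin 0 {0}ᶜ)
        (nhdsWithin 1 {1}ᶜ) := by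
      rw [tendsto_nhdsWithin_iff]
      constructor
      · have h0 : Tendsto (fun u : ℝ => 1 + u) (nhds 0) (nhds 1) := by
          have := ((continuous_const.add continuous_id').tendsto (0:ℝ) :
            Tendsto (fun u : ℝ => 1 + u) (nhds 0) (nhds (1 + 0)))
          simpa [Pi.add_def] using this
        exact h0.mono_left nhdsWithin_le_nhds
      · filter_upwards [hne] with u hu0
        simp only [Set.mem_compl_iff, Set.mem_singleton_iff]
        intro h
        exact hu0 (by linarith)
    have hcomp := hd.comp htrans
    simp only [inv_one] at hcomp
    refine hcomp.congr ?_
    intro u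
    simp [slope_def_field, Real.log_one]
  have hs0 : Tendsto (fun l => f l - 1 + Real.sqrt (f l ^ 2 - 1)) (nhdsWithin 0 {0}ᶜ)
      (nhdsWithin 0 {0}ᶜ) := by
    rw [tendsto_nhdsWithin_iff]
    constructor
    · have hg : Continuous (fun z : ℝ => z - 1 + Real.sqrt (z ^ 2 - 1)) := by continuity
      have := (hg.tendsto 1).comp hF
      simpa [Function.comp_def] using this
    · filter_upwards [hgt] with l hfl
      simp only [Set.mem_compl_iff, Set.mem_singleton_iff]
      have : 0 < f l - 1 + Real.sqrt (f l ^ 2 - 1) := by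
        have := Real.sqrt_nonneg (f l ^ 2 - 1)
        linarith
      exact ne_of_gt this
  have hA : Tendsto (fun l => Real.log (1 + (f l - 1 + Real.sqrt (f l ^ 2 - 1)))
      / (f l - 1 + Real.sqrt (f l ^ 2 - 1))) (nhdsWithin 0 {0}ᶜ) (nhds 1) := hu.comp hs0
  -- combine
  have hmain := hA.mul hD
  rw [one_mul] at hmain
  refine hmain.congr' ?_
  filter_upwards [hne, hgt] with l hl hfl
  have hsl : 0 < f l - 1 + Real.sqrt (f l ^ 2 - 1) := by
    have := Real.sqrt_nonneg (f l ^ 2 - 1)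
    linarith
  have hl' : |l| ≠ 0 := abs_ne_zero.mpr hl
  have h1 : 1 + (f l - 1 + Real.sqrt (f l ^ 2 - 1)) = f l + Real.sqrt (f l ^ 2 - 1) := by
    ring
  rw [h1]
  field_simp
end
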